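/- Under the paper's hypotheses (q odd prime power, r ≥ 2 even, nN = q^r - 1, gcd((q^r-1)/(q-1), N) = 2), for every a ∈ F_{q^r}^* and every b with r ≤ b ≤ n - 1, the b-symbol weight of the codeword c(a) = (Tr(a η^{jN}))_{j=0}^{n-1} equals n. Equivalently, the cyclic sequence (Tr(a η^{jN}))_j has no r consecutive zeros. -/

import Mathlib

/-- The `b`-symbol map `π_b`; indices are cyclic (mod `n`). -/
def pib {F : Type*} [Field F] {n : ℕ} (b : ℕ) (x : ZMod n → F) :
    ZMod n → (Fin b → F) :=
  fun i j => x (i + ((j : ℕ) : ZMod n))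

/-- The `b`-symbol Hamming weight `w_b(x)`. -/
noncomputable def wb {F : Type*} [Field F] {n : ℕ} (b : ℕ) (x : ZMod n → F) : ℕ :=
  Nat.card {i : ZMod n // pib b x i ≠ 0}

lemma nt_lemma (q r N n : ℕ) (hq2 : 2 ≤ q) (hr : 2 ≤ r) (hn : 0 < n)
    (hnN : n * N = q ^ r - 1)
    (hgcd : Nat.gcd ((q ^ r - 1) / (q - 1)) N = 2)
    (d : ℕ) (hdr : d ∣ r) (hnd : n ∣ q ^ d - 1) : d = r := by
  by_contra hne
  obtain ⟨e, he⟩ := hdr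
  have hd0 : d ≠ 0 := by rintro rfl; omega
  have he2 : 2 ≤ e := by
    rcases Nat.lt_or_ge e 2 with h | h
    · interval_cases e <;> omega
    · exact h
  obtain ⟨x, hxdef⟩ : ∃ x, x = q ^ d := ⟨_, rfl⟩
  obtain ⟨T, hTdef⟩ : ∃ T, T = ∑ i ∈ Finset.range e, x ^ i := ⟨_, rfl⟩
  rw [← hxdef] at hnd
  have hx1 : 1 ≤ x := hxdef ▸ Nat.one_le_pow _ _ (by omega)
  have hxq : q ≤ x := hxdef ▸ Nat.le_self_pow hd0 q
  have hfact : (x - 1) * T = x ^ e - 1 := by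
    have hgs := geom_sum_mul (x : ℤ) e
    have : ((x - 1 : ℕ) : ℤ) * (T : ℤ) = ((x ^ e - 1 : ℕ) : ℤ) := by
      rw [Nat.cast_sub hx1, Nat.cast_sub (Nat.one_le_pow _ _ (by omega)), hTdef]
      push_cast
      linarith [hgs]
    exact_mod_cast this
  have hqr : q ^ r = x ^ e := by rw [hxdef, ← pow_mul, ← he]
  obtain ⟨k, hk⟩ := hnd
  have hNkT : N = k * T := by
    refine Nat.eq_of_mul_eq_mul_left hn ?_
    rw [hnN, hqr, ← hfact, hk, mul_assoc]
  have hq1x : (q - 1) ∣ (x - 1) := by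
    have := Nat.sub_dvd_pow_sub_pow q 1 d
    rwa [one_pow, ← hxdef] at this
  obtain ⟨m, hm⟩ := hq1x
  have hq1r : (q - 1) ∣ q ^ r - 1 := by
    have := Nat.sub_dvd_pow_sub_pow q 1 r
    rwa [one_pow] at this
  have h1 : (q - 1) * ((q ^ r - 1) / (q - 1)) = q ^ r - 1 := Nat.mul_div_cancel' hq1r
  have hMmT : (q ^ r - 1) / (q - 1) = m * T := by
    refine Nat.eq_of_mul_eq_mul_left (show 0 < q - 1 by omega) ?_
    rw [h1, hqr, ← hfact, hm, mul_assoc]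
  have hTdvd : T ∣ 2 := by
    rw [← hgcd]
    exact Nat.dvd_gcd ⟨m, by rw [hMmT, mul_comm]⟩ ⟨k, by rw [hNkT, mul_comm]⟩
  have hT2 : T ≤ 2 := Nat.le_of_dvd (by norm_num) hTdvd
  have hTge : 1 + x ≤ T := by
    have hsub : Finset.range 2 ⊆ Finset.range e := Finset.range_subset_range.mpr he2
    have := Finset.sum_le_sum_of_subset (f := fun i => x ^ i) hsub
    rw [hTdef]
    simpa [Finset.sum_range_succ] using this
  omega

set_option synthInstance.maxHeartbeats 1000000 in
set_option maxHeartbeats 4000000 in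
/-- Theorem 3.3: under the paper's hypotheses, for every nonzero `a` and every
`b` with `r ≤ b ≤ n - 1`, the `b`-symbol weight of `c(a)` equals `n`. -/
theorem wb_eq_n_for_large_b (q r N n b : ℕ) (hq : IsPrimePow q) (hodd : Odd q)
    (hr : 2 ≤ r) (hre : Even r) (hN : 0 < N) [NeZero n]
    (hnN : n * N = q ^ r - 1)
    (hgcd : Nat.gcd ((q ^ r - 1) / (q - 1)) N = 2)
    (hrb : r ≤ b) (hbn : b ≤ n - 1)
    (F : Type*) [Field F] [Fintype F] (hF : Fintype.card F = q ^ r)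
    (K : Subfield F) (hK : Nat.card K = q)
    (η : Fˣ) (hη : ∀ x : Fˣ, x ∈ Subgroup.zpowers η)
    (a : F) (ha : a ≠ 0) :
    wb b (fun j : ZMod n => Algebra.trace ↥K F (a * (η : F) ^ (N * j.val))) = n := by
  have hq2 : 2 ≤ q := hq.two_le
  haveI : Fintype K := Fintype.ofFinite K
  have hKc : Fintype.card K = q := by rw [← Nat.card_eq_fintype_card]; exact hK
  haveI : Module.Finite ↥K F := Module.Finite.of_finite
  have hfr : Module.finrank ↥K F = r := by
    have h := Module.card_eq_pow_finrank (K := ↥K) (V := F)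
    rw [hF, hKc] at h
    exact (Nat.pow_right_injective hq2 h).symm
  -- order of η
  have hηord : orderOf η = q ^ r - 1 := by
    rw [orderOf_eq_card_of_forall_mem_zpowers hη, Nat.card_units,
      Nat.card_eq_fintype_card, hF]
  have hNdvd : N ∣ q ^ r - 1 := ⟨n, by rw [← hnN, mul_comm]⟩
  have hβord : orderOf (η ^ N) = n := by
    rw [orderOf_pow_of_dvd hN.ne' (hηord ▸ hNdvd), hηord, ← hnN,
      Nat.mul_div_cancel _ hN]
  set β : F := (η : F) ^ N with hβdef
  have hβE : β ∈ IntermediateField.adjoin ↥K {β} :=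
    IntermediateField.mem_adjoin_simple_self ↥K β
  set E := IntermediateField.adjoin ↥K {β} with hEdef
  haveI : Fintype E := Fintype.ofFinite E
  haveI : Module.Finite ↥K ↥E := Module.Finite.of_finite
  set d := Module.finrank ↥K ↥E with hddef
  have hdr : d ∣ r := by
    rw [← hfr]
    exact ⟨Module.finrank ↥E F, (Module.finrank_mul_finrank ↥K ↥E F).symm⟩
  have hEcard : Fintype.card E = q ^ d := by
    rw [Module.card_eq_pow_finrank (K := ↥K) (V := ↥E), hKc]
  have hnd : n ∣ q ^ d - 1 := by
    rw [← hβord, ← hEcard]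
    have hβne : (⟨β, hβE⟩ : E) ≠ 0 := by
      simp only [ne_eq, Subtype.ext_iff]
      exact fun h => (pow_ne_zero N (Units.ne_zero η)) h
    have hpow : (⟨β, hβE⟩ : E) ^ (Fintype.card E - 1) = 1 :=
      FiniteField.pow_card_sub_one_eq_one _ hβne
    have hpowF : β ^ (Fintype.card E - 1) = 1 := by
      have := congrArg (Subtype.val) hpow
      simpa using this
    apply orderOf_dvd_of_pow_eq_one
    apply Units.ext
    rw [Units.val_pow_eq_pow_val, Units.val_pow_eq_pow_val]
    simpa using hpowF
  have hd : d = r := nt_lemma q r N n hq2 hr (Nat.pos_of_ne_zero (NeZero.ne n))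
    hnN hgcd d hdr hnd
  -- minimal polynomial degree and power basis
  have hint : IsIntegral ↥K β := IsIntegral.of_finite ↥K β
  have hdeg : (minpoly ↥K β).natDegree = r := by
    rw [← IntermediateField.adjoin.finrank hint]
    exact hd
  have li := linearIndependent_pow (K := ↥K) (S := F) β
  rw [hdeg] at li
  have hcard : Fintype.card (Fin r) = Module.finrank ↥K F := by simp [hfr]
  haveI : Nonempty (Fin r) := ⟨⟨0, by omega⟩⟩
  let B := basisOfLinearIndependentOfCardEqFinrank li hcard
  have hB : ∀ j : Fin r, B j = β ^ (j : ℕ) := fun j => by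
    rw [coe_basisOfLinearIndependentOfCardEqFinrank]
  -- separability and nondegenerate trace form
  haveI : Algebra.IsAlgebraic ↥K F := Algebra.IsAlgebraic.of_finite ↥K F
  haveI : PerfectField ↥K := PerfectField.ofFinite
  have hndg := traceForm_nondegenerate ↥K F
  -- every window is nonzero
  have key : ∀ i : ZMod n,
      pib b (fun j : ZMod n => Algebra.trace ↥K F (a * (η : F) ^ (N * j.val))) i ≠ 0 := by
    intro i h0
    set a' : F := a * (η : F) ^ (N * i.val) with ha'def
    have ha' : a' ≠ 0 := mul_ne_zero ha (pow_ne_zero _ (Units.ne_zero η))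
    have hvan : ∀ j : Fin r, Algebra.traceForm ↥K F a' (B j) = 0 := by
      intro j
      have hjb : (j : ℕ) < b := lt_of_lt_of_le j.2 hrb
      have h1 := congrFun h0 ⟨(j : ℕ), hjb⟩
      simp only [pib, Pi.zero_apply] at h1
      have hexpu : η ^ (N * ((i + ((j : ℕ) : ZMod n)).val)) = η ^ (N * i.val + N * j) := by
        rw [pow_eq_pow_iff_modEq, hηord, ← hnN, ← mul_add]
        have hmod : ((i + ((j : ℕ) : ZMod n)).val) ≡ i.val + (j : ℕ) [MOD n] := by
          rw [← ZMod.natCast_eq_natCast_iff]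
          push_cast
          simp [ZMod.natCast_val, ZMod.cast_id]
        have := Nat.ModEq.mul_left' (c := N) hmod
        rwa [mul_comm N n] at this
      have hexp : (η : F) ^ (N * ((i + ((j : ℕ) : ZMod n)).val))
          = (η : F) ^ (N * i.val) * β ^ (j : ℕ) := by
        have := congrArg (Units.val) hexpu
        rw [Units.val_pow_eq_pow_val, Units.val_pow_eq_pow_val] at this
        rw [this, hβdef, ← pow_mul, ← pow_add]
      rw [hB j, Algebra.traceForm_apply, ha'def, mul_assoc, ← hexp]
      exact h1
    have hform : Algebra.traceForm ↥K F a' = 0 := B.ext fun j => by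
      rw [hvan j]; simp
    exact ha' (hndg.1 a' fun y => by rw [hform]; simp)
  have hcongr : wb b (fun j : ZMod n => Algebra.trace ↥K F (a * (η : F) ^ (N * j.val)))
      = Nat.card (ZMod n) := Nat.card_congr (Equiv.subtypeUnivEquiv key)
  rw [hcongr, Nat.card_zmod]
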